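/- (Testing/Carleson condition for the counterexample) Fix ε ∈ (0,1) and let (W_I)_{I∈𝒟}, (b_I)_{I∈𝒟} be as in the construction, and for I ∈ 𝒟^n set A_I = |I| ε^{-2(n+1)} b_I b_I^T. Then for every K ∈ 𝒟 with |K| = 2^{-n₀} and every e ∈ ℝ²: Σ_{I∈𝒟(K)} |A_I^{1/2} W_I e|²_{ℝ²} = Σ_{I∈𝒟(K)} |I| (β_{n(I)} ε^{-(n(I)+1)})² ⟨e, b_I⟩²_{ℝ²} ≤ (1-ε²)^{-2} |K| ⟨W_K e, e⟩_{ℝ²}, where n(I) is defined by |I| = 2^{-n(I)}. Equivalently, (1/|K|) Σ_{I∈𝒟(K)} W_I A_I W_I ≤ (1-ε²)^{-2} W_K as quadratic forms. -/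

import Mathlib

open MeasureTheory Set
open scoped ENNReal Matrix Pointwise Classical

noncomputable section

/-- The unit interval `I₀ = [0,1)`. -/
def I0 : Set ℝ := Set.Ico (0 : ℝ) 1

/-- The dyadic interval `[k/2^n, (k+1)/2^n)`. -/
def dyad (n k : ℕ) : Set ℝ := Set.Ico ((k : ℝ) / 2 ^ n) (((k : ℝ) + 1) / 2 ^ n)

/-- Real `d × d` matrices. -/
abbrev Mat (d : ℕ) := Matrix (Fin d) (Fin d) ℝ

/-- The Euclidean norm `|v|_{ℝ^d}`. -/
def enorm2 {d : ℕ} (v : Fin d → ℝ) : ℝ := Real.sqrt (∑ i, v i ^ 2)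

/-- The Euclidean inner product `⟨v, w⟩_{ℝ^d}`. -/
def dotp {d : ℕ} (v w : Fin d → ℝ) : ℝ := ∑ i, v i * w i

open scoped Classical in
/-- The positive semidefinite square root of a positive semidefinite matrix
(junk value `0` if the matrix is not positive semidefinite). -/
def matSqrt {d : ℕ} (A : Mat d) : Mat d := if h : A.PosSemidef then
    (h.1.eigenvectorUnitary : Mat d) * Matrix.diagonal (Real.sqrt ∘ h.1.eigenvalues) *
      (star h.1.eigenvectorUnitary : Mat d) else 0

/-- Order in the sense of quadratic forms: `A ⩽ B` iff `B - A` is positive semidefinite. -/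
def matLE {d : ℕ} (A B : Mat d) : Prop := (B - A).PosSemidef

/-- The average `⟨g⟩_I = |I|⁻¹ ∫_I g` of a (scalar- or vector-valued) function. -/
def avgOn {E : Type*} [NormedAddCommGroup E] [NormedSpace ℝ E] (I : Set ℝ) (g : ℝ → E) : E :=
  (volume I).toReal⁻¹ • ∫ x in I, g x

/-- The entrywise average `⟨W⟩_I` of a matrix-valued function. -/
def avgMat {d : ℕ} (I : Set ℝ) (W : ℝ → Mat d) : Mat d :=
  Matrix.of fun i j => avgOn I fun x => W x i j

/-- A matrix weight on `I₀`: an integrable function with symmetric values,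
positive definite a.e. on `I₀`. -/
structure IsMatrixWeight (d : ℕ) (W : ℝ → Mat d) : Prop where
  intOn : ∀ i j, IntegrableOn (fun x => W x i j) I0
  symm : ∀ x, (W x).IsSymm
  posdef : ∀ᵐ x ∂(volume.restrict I0), (W x).PosDef

/-- Membership in `L²_W(ℝ^d)`. -/
def MemL2W {d : ℕ} (W : ℝ → Mat d) (f : ℝ → Fin d → ℝ) : Prop :=
  Measurable f ∧ IntegrableOn (fun x => dotp (W x *ᵥ f x) (f x)) I0

/-- The squared norm `‖f‖²_{L²_W} = ∫_{I₀} ⟨W(x) f(x), f(x)⟩ dx`. -/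
def l2normSq {d : ℕ} (W : ℝ → Mat d) (f : ℝ → Fin d → ℝ) : ℝ :=
  ∫ x in I0, dotp (W x *ᵥ f x) (f x)

/-- The average `⟨φ W f⟩_I = |I|⁻¹ ∫_I φ(y) W(y) f(y) dy`. -/
def avgPhiWf {d : ℕ} (I : Set ℝ) (φ : ℝ → ℝ) (W : ℝ → Mat d) (f : ℝ → Fin d → ℝ) :
    Fin d → ℝ :=
  avgOn I fun y => φ y • (W y *ᵥ f y)

/-- Admissible functions `φ : I → [-1,1]`, measurable. -/
def Adm (I : Set ℝ) (φ : ℝ → ℝ) : Prop :=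
  Measurable φ ∧ ∀ y ∈ I, φ y ∈ Set.Icc (-1 : ℝ) 1

/-- The eigenvalue `α_n = 1/(1+ε^{2n+2})`. -/
def alphaC (ε : ℝ) (n : ℕ) : ℝ := 1 / (1 + ε ^ (2 * n + 2))

/-- The eigenvalue `β_n = ε^{2n+2}/(1+ε^{2n+2})`. -/
def betaC (ε : ℝ) (n : ℕ) : ℝ := ε ^ (2 * n + 2) / (1 + ε ^ (2 * n + 2))

/-- The rotation parameter `δ_n = (ε^{2n}(1-ε²)/(1-ε^{4n+2}))^{1/2}`. -/
def deltaC (ε : ℝ) (n : ℕ) : ℝ :=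
  Real.sqrt (ε ^ (2 * n) * (1 - ε ^ 2) / (1 - ε ^ (4 * n + 2)))

/-- The rotation angle `γ_n = arctan δ_n`. -/
def gammaC (ε : ℝ) (n : ℕ) : ℝ := Real.arctan (deltaC ε n)

/-- The orthonormal pairs `(a_I, b_I)` indexed by dyadic intervals `I = dyad n k`:
`a_{I₀} = (1,0)`, `b_{I₀} = (0,1)`, and for `I ∈ 𝒟^n`,
`a_{I±} = (cos γ_{n+1}) a_I ± (sin γ_{n+1}) b_I`,
`b_{I±} = (cos γ_{n+1}) b_I ∓ (sin γ_{n+1}) a_I`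
(the right child of `dyad n k` is `dyad (n+1) (2k+1)`, the left one `dyad (n+1) (2k)`). -/
def abC (ε : ℝ) : ℕ → ℕ → (Fin 2 → ℝ) × (Fin 2 → ℝ)
  | 0, _ => (![1, 0], ![0, 1])
  | n + 1, k =>
    let p := abC ε n (k / 2)
    let γ := gammaC ε (n + 1)
    if k % 2 = 1 then
      (Real.cos γ • p.1 + Real.sin γ • p.2, Real.cos γ • p.2 - Real.sin γ • p.1)
    else
      (Real.cos γ • p.1 - Real.sin γ • p.2, Real.cos γ • p.2 + Real.sin γ • p.1)

/-- The eigenvector `a_I` for `I = dyad n k`. -/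
def aC (ε : ℝ) (n k : ℕ) : Fin 2 → ℝ := (abC ε n k).1

/-- The eigenvector `b_I` for `I = dyad n k`. -/
def bC (ε : ℝ) (n k : ℕ) : Fin 2 → ℝ := (abC ε n k).2

/-- The average `W_I = α_n a_I a_Iᵀ + β_n b_I b_Iᵀ` for `I = dyad n k`. -/
def WC (ε : ℝ) (n k : ℕ) : Mat 2 :=
  alphaC ε n • Matrix.vecMulVec (aC ε n k) (aC ε n k) +
    betaC ε n • Matrix.vecMulVec (bC ε n k) (bC ε n k)

/-- The Carleson matrices `A_I = |I| ε^{-2(n+1)} b_I b_Iᵀ` for `I = dyad n k`. -/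
def AC (ε : ℝ) (n k : ℕ) : Mat 2 :=
  (((2 : ℝ) ^ n)⁻¹ * ((ε ^ (n + 1))⁻¹) ^ 2) • Matrix.vecMulVec (bC ε n k) (bC ε n k)

section Helpers

lemma dotp_comm' {d : ℕ} (v w : Fin d → ℝ) : dotp v w = dotp w v := by
  unfold dotp; exact Finset.sum_congr rfl fun i _ => mul_comm _ _

lemma dotp_add_left' {d : ℕ} (u u' v : Fin d → ℝ) :
    dotp (u + u') v = dotp u v + dotp u' v := by
  unfold dotp; rw [← Finset.sum_add_distrib]
  exact Finset.sum_congr rfl fun i _ => by simp [add_mul]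

lemma dotp_smul_left' {d : ℕ} (t : ℝ) (u v : Fin d → ℝ) :
    dotp (t • u) v = t * dotp u v := by
  unfold dotp; rw [Finset.mul_sum]
  exact Finset.sum_congr rfl fun i _ => by simp [mul_assoc]

lemma ortho (ε : ℝ) (n k : ℕ) :
    dotp (aC ε n k) (aC ε n k) = 1 ∧ dotp (bC ε n k) (bC ε n k) = 1 ∧
      dotp (aC ε n k) (bC ε n k) = 0 := by
  induction n generalizing k with
  | zero =>
    refine ⟨?_, ?_, ?_⟩ <;> simp [aC, bC, abC, dotp, Fin.sum_univ_two]
  | succ n ih =>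
    obtain ⟨ha, hb, hab⟩ := ih (k / 2)
    have hcs : Real.cos (gammaC ε (n+1)) ^ 2 + Real.sin (gammaC ε (n+1)) ^ 2 = 1 :=
      Real.cos_sq_add_sin_sq _
    set c := Real.cos (gammaC ε (n+1)) with hc
    set s := Real.sin (gammaC ε (n+1)) with hs
    simp only [aC, bC] at ha hb hab ⊢
    by_cases hk : k % 2 = 1 <;>
      simp only [abC, hk, if_true, if_false, reduceIte] <;>
      simp only [dotp, Fin.sum_univ_two, Pi.add_apply, Pi.sub_apply, Pi.smul_apply,
        smul_eq_mul] at ha hb hab ⊢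
    · exact ⟨by linear_combination c^2*ha + s^2*hb + 2*c*s*hab + hcs,
        by linear_combination s^2*ha + c^2*hb - 2*c*s*hab + hcs,
        by linear_combination (c^2-s^2)*hab + c*s*hb - c*s*ha⟩
    · exact ⟨by linear_combination c^2*ha + s^2*hb - 2*c*s*hab + hcs,
        by linear_combination s^2*ha + c^2*hb + 2*c*s*hab + hcs,
        by linear_combination (c^2-s^2)*hab + c*s*ha - c*s*hb⟩

lemma vecMulVec_mulVec' (u v x : Fin 2 → ℝ) :
    Matrix.vecMulVec u v *ᵥ x = dotp v x • u := by
  funext i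
  simp [Matrix.mulVec, Matrix.vecMulVec_apply, dotProduct, dotp, Fin.sum_univ_two]
  ring

lemma WC_mulVec (ε : ℝ) (n k : ℕ) (e : Fin 2 → ℝ) :
    WC ε n k *ᵥ e = (alphaC ε n * dotp (aC ε n k) e) • aC ε n k +
      (betaC ε n * dotp (bC ε n k) e) • bC ε n k := by
  rw [WC, Matrix.add_mulVec, Matrix.smul_mulVec, Matrix.smul_mulVec,
    vecMulVec_mulVec', vecMulVec_mulVec', smul_smul, smul_smul]

lemma AC_posSemidef {ε : ℝ} (hε0 : 0 < ε) (n k : ℕ) : (AC ε n k).PosSemidef := by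
  have hc : (0:ℝ) ≤ ((2 : ℝ) ^ n)⁻¹ * ((ε ^ (n + 1))⁻¹) ^ 2 := by positivity
  refine Matrix.PosSemidef.of_dotProduct_mulVec_nonneg ?_ ?_
  · show (AC ε n k)ᴴ = AC ε n k
    ext i j
    simp only [AC, Matrix.conjTranspose_apply, Matrix.smul_apply, Matrix.vecMulVec_apply,
      smul_eq_mul, star_trivial]
    ring
  · intro x
    have hx : star x = x := by funext i; simp
    rw [hx]
    simp only [AC, Matrix.smul_mulVec, vecMulVec_mulVec']
    simp only [dotProduct, Fin.sum_univ_two, Pi.smul_apply, smul_eq_mul, dotp]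
    nlinarith [mul_nonneg hc (sq_nonneg (bC ε n k 0 * x 0 + bC ε n k 1 * x 1))]

lemma enorm2_sq_matSqrt {A : Mat 2} (hA : A.PosSemidef) (v : Fin 2 → ℝ) :
    enorm2 (matSqrt A *ᵥ v) ^ 2 = dotp (A *ᵥ v) v := by
  rw [matSqrt, dif_pos hA]
  set S : Mat 2 := (hA.1.eigenvectorUnitary : Mat 2) *
    Matrix.diagonal (Real.sqrt ∘ hA.1.eigenvalues) * (star hA.1.eigenvectorUnitary : Mat 2) with hS
  have hsym : Sᴴ = S := by
    simp [hS, Matrix.conjTranspose_mul, Matrix.diagonal_conjTranspose, Matrix.mul_assoc,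
      Matrix.star_eq_conjTranspose]
  have h01 : S 1 0 = S 0 1 := by
    have h := congrFun (congrFun hsym 0) 1
    simpa [Matrix.conjTranspose_apply] using h
  have hmul : S * S = A := by
    have hU : (star hA.1.eigenvectorUnitary : Mat 2) * (hA.1.eigenvectorUnitary : Mat 2) = 1 :=
      Unitary.coe_star_mul_self _
    have hD : Matrix.diagonal (Real.sqrt ∘ hA.1.eigenvalues) *
        Matrix.diagonal (Real.sqrt ∘ hA.1.eigenvalues) =
          Matrix.diagonal (RCLike.ofReal ∘ hA.1.eigenvalues) := by
      rw [Matrix.diagonal_mul_diagonal]; congr 1; funext i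
      simp [Real.mul_self_sqrt (hA.eigenvalues_nonneg i)]
    conv_rhs => rw [hA.1.spectral_theorem, Unitary.conjStarAlgAut_apply]
    rw [← hD, hS]
    simp only [Matrix.mul_assoc]
    rw [← Matrix.mul_assoc (star hA.1.eigenvectorUnitary : Mat 2), hU, Matrix.one_mul]
  rw [← hmul]
  have hnn : (0:ℝ) ≤ ∑ i, (S *ᵥ v) i ^ 2 :=
    Finset.sum_nonneg fun i _ => sq_nonneg _
  simp only [enorm2]
  rw [Real.sq_sqrt hnn]
  simp only [dotp, Matrix.mulVec, Matrix.mul_apply, dotProduct, Fin.sum_univ_two]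
  linear_combination (v 0 ^ 2 * S 1 0 - v 0 * v 1 * (S 0 0 - S 1 1) - v 1 ^ 2 * S 0 1) * h01

lemma term_eq {ε : ℝ} (hε0 : 0 < ε) (n k : ℕ) (e : Fin 2 → ℝ) :
    enorm2 (matSqrt (AC ε n k) *ᵥ (WC ε n k *ᵥ e)) ^ 2 =
      ((2 : ℝ) ^ n)⁻¹ * (betaC ε n * (ε ^ (n + 1))⁻¹) ^ 2 * dotp e (bC ε n k) ^ 2 := by
  obtain ⟨ha, hb, hab⟩ := ortho ε n k
  rw [enorm2_sq_matSqrt (AC_posSemidef hε0 n k)]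
  have hAw : AC ε n k *ᵥ (WC ε n k *ᵥ e) =
      ((((2 : ℝ) ^ n)⁻¹ * ((ε ^ (n + 1))⁻¹) ^ 2) * dotp (bC ε n k) (WC ε n k *ᵥ e)) •
        bC ε n k := by
    rw [AC, Matrix.smul_mulVec, vecMulVec_mulVec', smul_smul]
  have hbw : dotp (bC ε n k) (WC ε n k *ᵥ e) = betaC ε n * dotp (bC ε n k) e := by
    rw [dotp_comm', WC_mulVec, dotp_add_left', dotp_smul_left', dotp_smul_left', hab, hb]
    ring
  rw [hAw, dotp_smul_left', hbw, dotp_comm' e (bC ε n k)]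
  ring

lemma cs_dotp (e b : Fin 2 → ℝ) (hb : dotp b b = 1) : dotp e b ^ 2 ≤ dotp e e := by
  simp only [dotp, Fin.sum_univ_two] at *
  nlinarith [sq_nonneg (e 0 * b 1 - e 1 * b 0)]

lemma parseval' (a b e : Fin 2 → ℝ) (ha : dotp a a = 1) (hb : dotp b b = 1)
    (hab : dotp a b = 0) : dotp a e ^ 2 + dotp b e ^ 2 = dotp e e := by
  simp only [dotp, Fin.sum_univ_two] at *
  linear_combination (e 0 ^ 2 * (1 - b 0 ^ 2) + e 1 ^ 2 * (1 - b 1 ^ 2)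
      - 2 * e 0 * e 1 * (b 0 * b 1)) * ha +
    (e 0 ^ 2 * a 1 ^ 2 + e 1 ^ 2 * a 0 ^ 2 - 2 * e 0 * e 1 * (a 0 * a 1)) * hb +
    (e 0 ^ 2 * (a 0 * b 0 - a 1 * b 1) + e 1 ^ 2 * (a 1 * b 1 - a 0 * b 0)
      + 2 * e 0 * e 1 * (a 0 * b 1 + a 1 * b 0)) * hab

lemma dyad_subset_facts {n k n₀ k₀ : ℕ} (h : dyad n k ⊆ dyad n₀ k₀) :
    n₀ ≤ n ∧ k₀ * 2 ^ (n - n₀) ≤ k ∧ k < (k₀ + 1) * 2 ^ (n - n₀) := by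
  have h2n : (0:ℝ) < 2 ^ n := by positivity
  have h2n0 : (0:ℝ) < 2 ^ n₀ := by positivity
  have hlt : ((k:ℝ)) / 2 ^ n < ((k:ℝ) + 1) / 2 ^ n := by
    rw [div_lt_div_iff₀ h2n h2n]
    nlinarith
  rw [dyad, dyad, Set.Ico_subset_Ico_iff hlt] at h
  obtain ⟨h1, h2⟩ := h
  have hii : (2:ℝ) ^ n₀ ≤ 2 ^ n := by
    have h3 : ((k:ℝ) + 1) / 2 ^ n - (k:ℝ) / 2 ^ n ≤
        ((k₀:ℝ) + 1) / 2 ^ n₀ - (k₀:ℝ) / 2 ^ n₀ := by linarith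
    have h4 : ((k:ℝ) + 1) / 2 ^ n - (k:ℝ) / 2 ^ n = ((2:ℝ) ^ n)⁻¹ := by field_simp; ring
    have h5 : ((k₀:ℝ) + 1) / 2 ^ n₀ - (k₀:ℝ) / 2 ^ n₀ = ((2:ℝ) ^ n₀)⁻¹ := by field_simp; ring
    rw [h4, h5] at h3
    exact (inv_le_inv₀ h2n h2n0).mp h3
  have hn : n₀ ≤ n := by
    have : (2:ℕ) ^ n₀ ≤ 2 ^ n := by exact_mod_cast hii
    exact (Nat.pow_le_pow_iff_right (by norm_num)).mp this
  have hpow : (2:ℕ) ^ n = 2 ^ (n - n₀) * 2 ^ n₀ := by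
    rw [← pow_add]; congr 1; omega
  have e1 : k₀ * 2 ^ n ≤ k * 2 ^ n₀ := by
    rw [div_le_div_iff₀ h2n0 h2n] at h1
    exact_mod_cast h1
  have e2 : (k + 1) * 2 ^ n₀ ≤ (k₀ + 1) * 2 ^ n := by
    rw [div_le_div_iff₀ h2n h2n0] at h2
    exact_mod_cast h2
  rw [hpow] at e1 e2
  refine ⟨hn, ?_, ?_⟩
  · have := e1
    rw [← mul_assoc] at this
    exact Nat.le_of_mul_le_mul_right this (by positivity)
  · have := e2
    rw [← mul_assoc] at this
    have h6 : k + 1 ≤ (k₀ + 1) * 2 ^ (n - n₀) :=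
      Nat.le_of_mul_le_mul_right this (by positivity)
    omega

end Helpers
/-- **Testing/Carleson condition for the counterexample.** For `ε ∈ (0,1)`, every dyadic
`K = dyad n₀ k₀` and every `e ∈ ℝ²`,
`Σ_{I∈𝒟(K)} |A_I^{1/2} W_I e|² = Σ_{I∈𝒟(K)} |I| (β_{n(I)} ε^{-(n(I)+1)})² ⟨e,b_I⟩²
  ≤ (1-ε²)^{-2} |K| ⟨W_K e, e⟩`. -/
theorem counterexample_testing_condition (ε : ℝ) (hε0 : 0 < ε) (hε1 : ε < 1)
    (n₀ k₀ : ℕ) (hk₀ : k₀ < 2 ^ n₀) (e : Fin 2 → ℝ) :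
    (∑' p : ℕ × ℕ,
        if p.2 < 2 ^ p.1 ∧ dyad p.1 p.2 ⊆ dyad n₀ k₀ then
          ENNReal.ofReal (enorm2 (matSqrt (AC ε p.1 p.2) *ᵥ (WC ε p.1 p.2 *ᵥ e)) ^ 2)
        else 0) =
      (∑' p : ℕ × ℕ,
        if p.2 < 2 ^ p.1 ∧ dyad p.1 p.2 ⊆ dyad n₀ k₀ then
          ENNReal.ofReal
            (((2 : ℝ) ^ p.1)⁻¹ * (betaC ε p.1 * (ε ^ (p.1 + 1))⁻¹) ^ 2 *
              dotp e (bC ε p.1 p.2) ^ 2)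
        else 0) ∧
    (∑' p : ℕ × ℕ,
        if p.2 < 2 ^ p.1 ∧ dyad p.1 p.2 ⊆ dyad n₀ k₀ then
          ENNReal.ofReal (enorm2 (matSqrt (AC ε p.1 p.2) *ᵥ (WC ε p.1 p.2 *ᵥ e)) ^ 2)
        else 0) ≤
      ENNReal.ofReal
        (((1 - ε ^ 2)⁻¹) ^ 2 * ((2 : ℝ) ^ n₀)⁻¹ * dotp (WC ε n₀ k₀ *ᵥ e) e) := by
  have hE0 : (0:ℝ) ≤ dotp e e := by
    simp only [dotp, Fin.sum_univ_two]
    nlinarith [sq_nonneg (e 0), sq_nonneg (e 1)]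
  have hε2 : ε ^ 2 < 1 := by nlinarith
  have hD : (0:ℝ) < 1 - ε ^ 2 := by linarith
  have heq : (∑' p : ℕ × ℕ,
        if p.2 < 2 ^ p.1 ∧ dyad p.1 p.2 ⊆ dyad n₀ k₀ then
          ENNReal.ofReal (enorm2 (matSqrt (AC ε p.1 p.2) *ᵥ (WC ε p.1 p.2 *ᵥ e)) ^ 2)
        else 0) =
      (∑' p : ℕ × ℕ,
        if p.2 < 2 ^ p.1 ∧ dyad p.1 p.2 ⊆ dyad n₀ k₀ then
          ENNReal.ofReal
            (((2 : ℝ) ^ p.1)⁻¹ * (betaC ε p.1 * (ε ^ (p.1 + 1))⁻¹) ^ 2 *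
              dotp e (bC ε p.1 p.2) ^ 2)
        else 0) := by
    refine tsum_congr fun p => ?_
    split_ifs with h
    · exact congrArg ENNReal.ofReal (term_eq hε0 p.1 p.2 e)
    · rfl
  refine ⟨heq, ?_⟩
  rw [heq]
  have hreal : ∀ n k : ℕ,
      ((2:ℝ) ^ n)⁻¹ * (betaC ε n * (ε ^ (n + 1))⁻¹) ^ 2 * dotp e (bC ε n k) ^ 2 ≤
        ((2:ℝ) ^ n)⁻¹ * ε ^ (2 * n + 2) * dotp e e := by
    intro n k
    have hεn : (0:ℝ) < ε ^ (n + 1) := by positivity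
    have hδ0 : (0:ℝ) < 1 + ε ^ (2 * n + 2) := by positivity
    have hcs : dotp e (bC ε n k) ^ 2 ≤ dotp e e := cs_dotp e _ (ortho ε n k).2.1
    have hβ0 : 0 ≤ betaC ε n * (ε ^ (n + 1))⁻¹ := by
      rw [betaC]; positivity
    have hβ2 : betaC ε n * (ε ^ (n + 1))⁻¹ ≤ ε ^ (n + 1) := by
      rw [betaC, div_mul_eq_mul_div, div_le_iff₀ hδ0]
      have h1 : ε ^ (2 * n + 2) * (ε ^ (n + 1))⁻¹ = ε ^ (n + 1) := by
        rw [show 2 * n + 2 = (n + 1) + (n + 1) by ring, pow_add,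
          mul_assoc, mul_inv_cancel₀ (ne_of_gt hεn), mul_one]
      rw [h1]
      nlinarith [pow_pos hε0 (2 * n + 2)]
    have hb2 : (betaC ε n * (ε ^ (n + 1))⁻¹) ^ 2 ≤ ε ^ (2 * n + 2) := by
      calc (betaC ε n * (ε ^ (n + 1))⁻¹) ^ 2 ≤ (ε ^ (n + 1)) ^ 2 :=
            pow_le_pow_left₀ hβ0 hβ2 2
        _ = ε ^ (2 * n + 2) := by ring
    have h2i : (0:ℝ) ≤ ((2:ℝ) ^ n)⁻¹ := by positivity
    rw [mul_assoc, mul_assoc]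
    refine mul_le_mul_of_nonneg_left ?_ h2i
    exact mul_le_mul hb2 hcs (sq_nonneg _) (by positivity)
  set F : ℕ → ℕ → ℝ≥0∞ := fun n k =>
    if k < 2 ^ n ∧ dyad n k ⊆ dyad n₀ k₀ then
      ENNReal.ofReal (((2:ℝ) ^ n)⁻¹ * (betaC ε n * (ε ^ (n + 1))⁻¹) ^ 2 *
        dotp e (bC ε n k) ^ 2)
    else 0 with hF
  set u : ℕ → ℝ≥0∞ := fun n =>
    ENNReal.ofReal (((2:ℝ) ^ n)⁻¹ * ε ^ (2 * n + 2) * dotp e e) with hu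
  set G : ℕ → ℝ≥0∞ := fun n =>
    if n₀ ≤ n then (2:ℝ≥0∞) ^ (n - n₀) * u n else 0 with hG
  have hinner : ∀ n : ℕ, (∑' k : ℕ, F n k) ≤ G n := by
    intro n
    by_cases hn : n₀ ≤ n
    · have hGn : G n = (2:ℝ≥0∞) ^ (n - n₀) * u n := by rw [hG]; exact if_pos hn
      rw [hGn]
      set s : Finset ℕ := Finset.Ico (k₀ * 2 ^ (n - n₀)) ((k₀ + 1) * 2 ^ (n - n₀)) with hs
      have hstep1 : ∀ k : ℕ, F n k ≤ (if k ∈ s then u n else 0) := by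
        intro k
        by_cases hcnd : k < 2 ^ n ∧ dyad n k ⊆ dyad n₀ k₀
        · obtain ⟨-, h2, h3⟩ := dyad_subset_facts hcnd.2
          rw [hF]
          simp only
          rw [if_pos hcnd, if_pos (Finset.mem_Ico.mpr ⟨h2, h3⟩), hu]
          exact ENNReal.ofReal_le_ofReal (hreal n k)
        · rw [hF]; simp only; rw [if_neg hcnd]; exact zero_le'
      refine le_trans (ENNReal.tsum_le_tsum hstep1) ?_
      rw [tsum_eq_sum (s := s) (fun k hk => if_neg hk)]
      have hcard : s.card = 2 ^ (n - n₀) := by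
        rw [hs, Nat.card_Ico, add_mul, one_mul, Nat.add_sub_cancel_left]
      calc (∑ k ∈ s, if k ∈ s then u n else 0) = ∑ k ∈ s, u n :=
            Finset.sum_congr rfl fun k hk => if_pos hk
        _ = s.card • u n := Finset.sum_const _
        _ = (2:ℝ≥0∞) ^ (n - n₀) * u n := by
            rw [hcard, nsmul_eq_mul, Nat.cast_pow, Nat.cast_ofNat]
        _ ≤ (2:ℝ≥0∞) ^ (n - n₀) * u n := le_rfl
    · have hGn : G n = 0 := by rw [hG]; exact if_neg hn
      rw [hGn]
      have hz : ∀ k : ℕ, F n k = 0 := by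
        intro k
        rw [hF]
        simp only
        rw [if_neg]
        rintro ⟨-, hsub⟩
        exact hn (dyad_subset_facts hsub).1
      calc (∑' k : ℕ, F n k) = ∑' _ : ℕ, (0:ℝ≥0∞) := tsum_congr hz
        _ = 0 := tsum_zero
        _ ≤ 0 := le_rfl
  have hCr0 : (0:ℝ) ≤ ((2:ℝ) ^ n₀)⁻¹ * ε ^ (2 * n₀ + 2) * dotp e e := by positivity
  have hGsupp : Function.support G ⊆ Set.range (fun m : ℕ => n₀ + m) := by
    intro x hx
    simp only [Function.mem_support] at hx
    by_cases hxn : n₀ ≤ x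
    · exact ⟨x - n₀, show n₀ + (x - n₀) = x by omega⟩
    · exact absurd (by rw [hG]; exact if_neg hxn) hx
  have hre : (∑' n : ℕ, G n) = ∑' m : ℕ, G (n₀ + m) :=
    (Function.Injective.tsum_eq (fun a b hab => by omega) hGsupp).symm
  have hGval : ∀ m : ℕ, G (n₀ + m) =
      ENNReal.ofReal (((2:ℝ) ^ n₀)⁻¹ * ε ^ (2 * n₀ + 2) * dotp e e) *
        (ENNReal.ofReal (ε ^ 2)) ^ m := by
    intro m
    have hms : n₀ + m - n₀ = m := by omega
    have h2m : ((2:ℝ≥0∞)) ^ m = ENNReal.ofReal ((2:ℝ) ^ m) := by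
      rw [ENNReal.ofReal_pow (by norm_num), ENNReal.ofReal_ofNat]
    rw [hG]
    simp only
    rw [if_pos (Nat.le_add_right _ _), hms, hu]
    simp only
    rw [h2m, ← ENNReal.ofReal_mul (by positivity), ← ENNReal.ofReal_pow (sq_nonneg ε),
      ← ENNReal.ofReal_mul (by positivity)]
    congr 1
    have hne : (2:ℝ) ^ (n₀ + m) ≠ 0 := by positivity
    have hne0 : (2:ℝ) ^ n₀ ≠ 0 := by positivity
    field_simp
    ring
  have hfinal : (((2:ℝ) ^ n₀)⁻¹ * ε ^ (2 * n₀ + 2) * dotp e e) * (1 - ε ^ 2)⁻¹ ≤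
      ((1 - ε ^ 2)⁻¹) ^ 2 * ((2:ℝ) ^ n₀)⁻¹ * dotp (WC ε n₀ k₀ *ᵥ e) e := by
    obtain ⟨ha, hb, hab⟩ := ortho ε n₀ k₀
    have hpars := parseval' _ _ e ha hb hab
    have hwe : dotp (WC ε n₀ k₀ *ᵥ e) e =
        alphaC ε n₀ * dotp (aC ε n₀ k₀) e ^ 2 + betaC ε n₀ * dotp (bC ε n₀ k₀) e ^ 2 := by
      rw [WC_mulVec, dotp_add_left', dotp_smul_left', dotp_smul_left']
      ring
    have hδpos : (0:ℝ) < 1 + ε ^ (2 * n₀ + 2) := by positivity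
    have hP0 : (0:ℝ) < ε ^ (2 * n₀ + 2) := by positivity
    have hP1 : ε ^ (2 * n₀ + 2) ≤ ε ^ 2 := by
      calc ε ^ (2 * n₀ + 2) = ε ^ (2 * n₀) * ε ^ 2 := by ring
        _ ≤ 1 * ε ^ 2 :=
            mul_le_mul_of_nonneg_right (pow_le_one₀ hε0.le hε1.le) (sq_nonneg ε)
        _ = ε ^ 2 := one_mul _
    have hαβ : betaC ε n₀ ≤ alphaC ε n₀ := by
      rw [alphaC, betaC, div_le_div_iff₀ hδpos hδpos]
      nlinarith [hP1, hε2, hδpos]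
    have hβ0 : (0:ℝ) ≤ betaC ε n₀ := by rw [betaC]; positivity
    have hQ : betaC ε n₀ * dotp e e ≤ dotp (WC ε n₀ k₀ *ᵥ e) e := by
      rw [hwe, ← hpars]
      nlinarith [sq_nonneg (dotp (aC ε n₀ k₀) e)]
    have step : ε ^ (2 * n₀ + 2) * (1 - ε ^ 2) * dotp e e ≤ betaC ε n₀ * dotp e e := by
      rw [betaC, div_mul_eq_mul_div, le_div_iff₀ hδpos]
      nlinarith [mul_nonneg (mul_nonneg hE0 hP0.le) (sub_nonneg.2 hP1),
        mul_nonneg (mul_nonneg hE0 hP0.le) (mul_nonneg hP0.le (sq_nonneg ε))]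
    calc (((2:ℝ) ^ n₀)⁻¹ * ε ^ (2 * n₀ + 2) * dotp e e) * (1 - ε ^ 2)⁻¹
        = ((1 - ε ^ 2)⁻¹) ^ 2 * ((2:ℝ) ^ n₀)⁻¹ *
            (ε ^ (2 * n₀ + 2) * (1 - ε ^ 2) * dotp e e) := by
          field_simp
      _ ≤ ((1 - ε ^ 2)⁻¹) ^ 2 * ((2:ℝ) ^ n₀)⁻¹ * (betaC ε n₀ * dotp e e) :=
          mul_le_mul_of_nonneg_left step (by positivity)
      _ ≤ ((1 - ε ^ 2)⁻¹) ^ 2 * ((2:ℝ) ^ n₀)⁻¹ * dotp (WC ε n₀ k₀ *ᵥ e) e :=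
          mul_le_mul_of_nonneg_left hQ (by positivity)
  calc (∑' p : ℕ × ℕ, F p.1 p.2)
      = ∑' (n : ℕ) (k : ℕ), F n k := ENNReal.tsum_prod' (f := fun p => F p.1 p.2)
    _ ≤ ∑' n : ℕ, G n := ENNReal.tsum_le_tsum hinner
    _ = ∑' m : ℕ, G (n₀ + m) := hre
    _ = ∑' m : ℕ, ENNReal.ofReal (((2:ℝ) ^ n₀)⁻¹ * ε ^ (2 * n₀ + 2) * dotp e e) *
          (ENNReal.ofReal (ε ^ 2)) ^ m := tsum_congr hGval
    _ = ENNReal.ofReal (((2:ℝ) ^ n₀)⁻¹ * ε ^ (2 * n₀ + 2) * dotp e e) *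
          (1 - ENNReal.ofReal (ε ^ 2))⁻¹ := by
        rw [ENNReal.tsum_mul_left, ENNReal.tsum_geometric]
    _ = ENNReal.ofReal ((((2:ℝ) ^ n₀)⁻¹ * ε ^ (2 * n₀ + 2) * dotp e e) * (1 - ε ^ 2)⁻¹) := by
        rw [show (1:ℝ≥0∞) - ENNReal.ofReal (ε ^ 2) = ENNReal.ofReal (1 - ε ^ 2) by
            rw [ENNReal.ofReal_sub 1 (sq_nonneg ε), ENNReal.ofReal_one],
          ← ENNReal.ofReal_inv_of_pos hD, ← ENNReal.ofReal_mul hCr0]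
    _ ≤ ENNReal.ofReal
        (((1 - ε ^ 2)⁻¹) ^ 2 * ((2:ℝ) ^ n₀)⁻¹ * dotp (WC ε n₀ k₀ *ᵥ e) e) :=
        ENNReal.ofReal_le_ofReal hfinal
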